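/- Let D be the Dirac operator of the ancestral-pair spectral triple of a translation fractal F with level-n ratios λ_n and branching numbers p_n, so that the eigenvalues of |D|^{-1} are rΛ_n each with multiplicity 2P_n (Λ_n = ∏_{i≤n}λ_i, P_n = ∏_{i≤n}p_i, P_0 = Λ_0 = 1). Then for α > 0 the trace Tr(|D|^{-α}) = 2r^α ∑_{n≥0} P_n Λ_n^α is finite if α > limsup_n (log P_n)/(log 1/Λ_n) and infinite if α < limsup_n (log P_n)/(log 1/Λ_n). -/

import Mathlib

open Filter

/-- For the ancestral-pair spectral triple of a translation fractal, the trace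
`Tr(|D|^{-α}) = 2 r^α ∑_n P_n Λ_n^α` is finite when `α > limsup (log P_n)/(log 1/Λ_n)`
and infinite when `α < limsup (log P_n)/(log 1/Λ_n)`. -/
theorem stmt10 (lam : ℕ → ℝ) (hlam : ∀ n, lam n ∈ Set.Ioo (0 : ℝ) 1)
    (hsup : ∃ c : ℝ, c < 1 ∧ ∀ n, lam n ≤ c)
    (p : ℕ → ℕ) (hp : ∀ n, 2 ≤ p n) (r : ℝ) (hr : 0 < r) (α : ℝ) (hα : 0 < α) :
    let Λ : ℕ → ℝ := fun n => ∏ i ∈ Finset.range n, lam i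
    let P : ℕ → ℝ := fun n => ∏ i ∈ Finset.range n, (p i : ℝ)
    let L : EReal := limsup
      (fun n => ((Real.log (P n) / Real.log (1 / Λ n) : ℝ) : EReal)) atTop
    ((L < (α : EReal)) → Summable (fun n => 2 * r ^ α * (P n * Λ n ^ α))) ∧
    (((α : EReal) < L) → ¬ Summable (fun n => 2 * r ^ α * (P n * Λ n ^ α))) := by
  intro Λ P L
  obtain ⟨c, hc1, hc⟩ := hsup
  have hc0 : 0 < c := lt_of_lt_of_le (hlam 0).1 (hc 0)
  have hΛpos : ∀ n, 0 < Λ n := fun n =>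
    Finset.prod_pos fun i _ => (hlam i).1
  have hΛle : ∀ n, Λ n ≤ c ^ n := by
    intro n
    calc Λ n ≤ ∏ i ∈ Finset.range n, c :=
          Finset.prod_le_prod (fun i _ => (hlam i).1.le) (fun i _ => hc i)
      _ = c ^ n := by simp
  have hΛlt1 : ∀ n, 1 ≤ n → Λ n < 1 := by
    intro n hn
    calc Λ n ≤ c ^ n := hΛle n
      _ ≤ c := pow_le_of_le_one hc0.le hc1.le (by omega)
      _ < 1 := hc1
  have hP1 : ∀ n, 1 ≤ P n := by
    intro n
    show (1:ℝ) ≤ ∏ i ∈ Finset.range n, (p i : ℝ)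
    rw [← Nat.cast_prod]
    exact_mod_cast Finset.one_le_prod' (fun i _ => (hp i).trans' one_le_two : ∀ i ∈ Finset.range n, 1 ≤ p i)
  have hfpos : ∀ n, 0 < P n * Λ n ^ α := fun n =>
    mul_pos (lt_of_lt_of_le one_pos (hP1 n)) (Real.rpow_pos_of_pos (hΛpos n) α)
  have hlogf : ∀ n, Real.log (P n * Λ n ^ α) = Real.log (P n) + α * Real.log (Λ n) := by
    intro n
    rw [Real.log_mul (lt_of_lt_of_le one_pos (hP1 n)).ne'
      (Real.rpow_pos_of_pos (hΛpos n) α).ne', Real.log_rpow (hΛpos n)]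
  have hlog1div : ∀ n, Real.log (1 / Λ n) = -Real.log (Λ n) := by
    intro n; rw [one_div, Real.log_inv]
  constructor
  · -- summable case
    intro hLα
    obtain ⟨b, hLb, hbα⟩ := EReal.exists_between_coe_real hLα
    have hbα' : b < α := by exact_mod_cast hbα
    have hev : ∀ᶠ n in atTop,
        ((Real.log (P n) / Real.log (1 / Λ n) : ℝ) : EReal) < (b : EReal) :=
      eventually_lt_of_limsup_lt hLb
    obtain ⟨N, hN⟩ := hev.exists_forall_of_atTop
    set q : ℝ := c ^ (α - b) with hq
    have hq0 : 0 < q := Real.rpow_pos_of_pos hc0 _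
    have hq1 : q < 1 := Real.rpow_lt_one hc0.le hc1 (by linarith)
    have key : ∀ n, N + 1 ≤ n → P n * Λ n ^ α ≤ q ^ n := by
      intro n hn
      have hn1 : 1 ≤ n := by omega
      have hΛ1 := hΛlt1 n hn1
      have hlogpos : 0 < Real.log (1 / Λ n) := by
        rw [hlog1div]
        simpa using Real.log_neg (hΛpos n) hΛ1
      have hx : Real.log (P n) / Real.log (1 / Λ n) < b := by
        exact_mod_cast hN n (by omega)
      have hPlt : Real.log (P n) < b * Real.log (1 / Λ n) := (div_lt_iff₀ hlogpos).mp hx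
      have hΛlog : Real.log (Λ n) ≤ n * Real.log c := by
        calc Real.log (Λ n) ≤ Real.log (c ^ n) :=
              Real.log_le_log (hΛpos n) (hΛle n)
          _ = n * Real.log c := by rw [Real.log_pow]
      have h1 : Real.log (P n * Λ n ^ α) ≤ (α - b) * Real.log (Λ n) := by
        rw [hlogf n]
        rw [hlog1div] at hPlt
        nlinarith
      have h2 : (α - b) * Real.log (Λ n) ≤ (α - b) * (n * Real.log c) :=
        mul_le_mul_of_nonneg_left hΛlog (by linarith)
      have h3 : Real.log (q ^ n) = (α - b) * (n * Real.log c) := by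
        rw [Real.log_pow, hq, Real.log_rpow hc0]; ring
      have := (h1.trans h2).trans_eq h3.symm
      exact (Real.log_le_log_iff (hfpos n) (pow_pos hq0 n)).mp this
    apply Summable.mul_left
    rw [← summable_nat_add_iff (N + 1)]
    apply Summable.of_nonneg_of_le (fun n => (hfpos _).le)
      (fun n => key (n + (N + 1)) (by omega))
    have : Summable (fun n : ℕ => q ^ (N + 1) * q ^ n) :=
      (summable_geometric_of_lt_one hq0.le hq1).mul_left _
    refine this.congr fun n => ?_
    rw [← pow_add]; ring_nf
  · -- divergent case
    intro hαL hsumm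
    have hfreq : ∃ᶠ n in atTop,
        (α : EReal) < ((Real.log (P n) / Real.log (1 / Λ n) : ℝ) : EReal) :=
      frequently_lt_of_lt_limsup (by isBoundedDefault) hαL
    have htend : Tendsto (fun n => 2 * r ^ α * (P n * Λ n ^ α)) atTop (nhds 0) :=
      hsumm.tendsto_atTop_zero
    have hev : ∀ᶠ n in atTop, 2 * r ^ α * (P n * Λ n ^ α) < 2 * r ^ α :=
      htend.eventually_lt_const (by positivity)
    obtain ⟨n, hn1, hn2⟩ := (hfreq.and_eventually hev).exists
    have hxa : α < Real.log (P n) / Real.log (1 / Λ n) := by exact_mod_cast hn1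
    have hn0 : 1 ≤ n := by
      by_contra h
      have : n = 0 := by omega
      subst this
      simp [P, Λ] at hxa
      linarith
    have hΛ1 := hΛlt1 n hn0
    have hlogpos : 0 < Real.log (1 / Λ n) := by
      rw [hlog1div]
      simpa using Real.log_neg (hΛpos n) hΛ1
    have hPgt : α * Real.log (1 / Λ n) < Real.log (P n) := (lt_div_iff₀ hlogpos).mp hxa
    rw [hlog1div] at hPgt
    have hlogfpos : 0 < Real.log (P n * Λ n ^ α) := by
      rw [hlogf n]; nlinarith
    have hge1 : 1 < P n * Λ n ^ α := (Real.log_pos_iff (hfpos n).le).mp hlogfpos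
    have : 2 * r ^ α < 2 * r ^ α * (P n * Λ n ^ α) := by
      nlinarith [Real.rpow_pos_of_pos hr α]
    linarith
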